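/- arXiv:2007.01337 — 6 statements merged into one kernel-verified Lean document; each statement's English description precedes it below -/
import Mathlib

section
/- A vertex v of the Hamming graph resolves two distinct strings x and y if and only if ⟨V, X - Y⟩ ≠ 0, where V, X, Y are the vectorized one-hot encodings of v, x, y respectively. Equivalently, d(v,x) = d(v,y) iff ⟨V, X⟩ = ⟨V, Y⟩. -/
lemma inner_eq_card (k m : ℕ) (v x : Fin k → Fin m)
    (V X : Fin m × Fin k → ℤ)
    (hV : ∀ p, V p = if v p.2 = p.1 then 1 else 0)
    (hX : ∀ p, X p = if x p.2 = p.1 then 1 else 0) :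
    ∑ p, V p * X p = (k : ℤ) - hammingDist v x := by
  have h1 : ∑ p, V p * X p
      = ∑ j : Fin k, ∑ i : Fin m, (if v j = i then (1:ℤ) else 0) * (if x j = i then 1 else 0) := by
    rw [Fintype.sum_prod_type, Finset.sum_comm]
    simp only [hV, hX]
  rw [h1]
  have h2 : ∀ j : Fin k, ∑ i : Fin m, (if v j = i then (1:ℤ) else 0) * (if x j = i then 1 else 0)
      = if v j = x j then 1 else 0 := by
    intro j
    simp [boole_mul, Finset.sum_ite_eq, eq_comm]
  simp only [h2]
  rw [Finset.sum_boole]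
  have h3 : (Finset.filter (fun j => v j = x j) Finset.univ).card
      + (Finset.filter (fun j => ¬ v j = x j) Finset.univ).card = k := by
    rw [Finset.card_filter_add_card_filter_not]
    simp
  unfold hammingDist
  push_cast
  simp only [ne_eq]
  omega

theorem resolve_iff_inner (k m : ℕ) (v x y : Fin k → Fin m) (hxy : x ≠ y)
    (V X Y : Fin m × Fin k → ℤ)
    (hV : ∀ p, V p = if v p.2 = p.1 then 1 else 0)
    (hX : ∀ p, X p = if x p.2 = p.1 then 1 else 0)
    (hY : ∀ p, Y p = if y p.2 = p.1 then 1 else 0) :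
    (hammingDist v x ≠ hammingDist v y ↔ ∑ p, V p * (X p - Y p) ≠ 0) ∧
    (hammingDist v x = hammingDist v y ↔ ∑ p, V p * X p = ∑ p, V p * Y p) := by
  have hx := inner_eq_card k m v x V X hV hX
  have hy := inner_eq_card k m v y V Y hV hY
  have hdiff : ∑ p, V p * (X p - Y p) = ∑ p, V p * X p - ∑ p, V p * Y p := by
    rw [← Finset.sum_sub_distrib]
    congr 1; ext p; ring
  constructor
  · rw [hdiff, hx, hy]
    constructor
    · intro h hc; apply h; omega
    · intro h hc; apply h; rw [hc]; ring
  · rw [hx, hy]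
    constructor
    · intro h; rw [h]
    · intro h; omega
end

section
/- Let R = {v₁,…,vₙ} be a set of strings of length k over an alphabet of size m, with Vᵢ the vectorized one-hot encoding of vᵢ. Then R is a resolving set of the Hamming graph H(k,m) if and only if there is no nonzero z : (Fin k × Fin m) → ℤ with ⟨Vᵢ, z⟩ = 0 for all i, such that for each j : Fin k, the block (z (j, 0), …, z (j, m-1)) is either identically zero or contains exactly one entry equal to 1, exactly one entry equal to -1, and all other entries equal to 0. -/
open Finset in
theorem count_lemma' (k m : ℕ) (w x : Fin k → Fin m) :
    ∑ p : Fin k × Fin m, (if w p.1 = p.2 then (1:ℤ) else 0) * (if x p.1 = p.2 then 1 else 0)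
      = (k : ℤ) - hammingDist w x := by
  rw [Fintype.sum_prod_type]
  have h1 : ∀ j : Fin k, ∑ i : Fin m, (if w j = i then (1:ℤ) else 0) * (if x j = i then 1 else 0)
      = if w j = x j then 1 else 0 := by
    intro j
    rw [Finset.sum_eq_single (w j)]
    · simp [eq_comm]
    · intro b _ hb; simp [Ne.symm hb]
    · simp
  simp only [h1]
  rw [Finset.sum_boole]
  have h2 : ((univ : Finset (Fin k)).filter fun j => w j = x j).card + hammingDist w x = k := by
    unfold hammingDist
    simpa using Finset.card_filter_add_card_filter_not (s := univ)
      (p := fun j : Fin k => w j = x j)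
  omega

theorem resolving_iff_no_nontrivial_solution (k m n : ℕ) (v : Fin n → (Fin k → Fin m))
    (V : Fin n → (Fin k × Fin m) → ℤ)
    (hV : ∀ i p, V i p = if v i p.1 = p.2 then 1 else 0) :
    (∀ x y : Fin k → Fin m, x ≠ y → ∃ i, hammingDist (v i) x ≠ hammingDist (v i) y) ↔
    ¬ ∃ z : (Fin k × Fin m) → ℤ, z ≠ 0 ∧ (∀ i, ∑ p, V i p * z p = 0) ∧
      (∀ j : Fin k, (∀ i : Fin m, z (j, i) = 0) ∨
        (∃ p q : Fin m, p ≠ q ∧ z (j, p) = 1 ∧ z (j, q) = -1 ∧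
          ∀ r : Fin m, r ≠ p → r ≠ q → z (j, r) = 0)) := by
  -- key: inner product of V i with the difference-indicator of (x,y)
  have key : ∀ (x y : Fin k → Fin m) (i : Fin n),
      ∑ p : Fin k × Fin m, V i p *
          ((if x p.1 = p.2 then (1:ℤ) else 0) - (if y p.1 = p.2 then 1 else 0))
        = (hammingDist (v i) y : ℤ) - hammingDist (v i) x := by
    intro x y i
    simp only [mul_sub, Finset.sum_sub_distrib, hV]
    rw [count_lemma', count_lemma']
    ring
  constructor
  · rintro hres ⟨z, hz0, hzV, hblk⟩
    -- build x, y from block structure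
    have hex : ∀ j : Fin k, ∃ a b : Fin m,
        ∀ i : Fin m, z (j, i) = (if a = i then (1:ℤ) else 0) - (if b = i then 1 else 0) := by
      intro j
      rcases hblk j with h | ⟨p, q, hpq, hp, hq, hrest⟩
      · obtain ⟨p, hp⟩ : ∃ p : Fin k × Fin m, z p ≠ 0 := by
          by_contra hc; push_neg at hc; exact hz0 (funext fun p => hc p)
        exact ⟨p.2, p.2, fun i => by simp [h i]⟩
      · refine ⟨p, q, fun i => ?_⟩
        by_cases hip : i = p
        · subst hip; simp [hp, Ne.symm hpq]
        · by_cases hiq : i = q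
          · subst hiq; simp [hq, hpq]
          · simp [hrest i hip hiq, Ne.symm hip, Ne.symm hiq]
    choose x y hxy using hex
    have hzeq : ∀ p : Fin k × Fin m,
        z p = (if x p.1 = p.2 then (1:ℤ) else 0) - (if y p.1 = p.2 then 1 else 0) := by
      rintro ⟨j, i⟩; exact hxy j i
    have hne : x ≠ y := by
      intro h
      apply hz0
      funext p
      rw [hzeq p, h]
      simp
    obtain ⟨i, hi⟩ := hres x y hne
    apply hi
    have := hzV i
    rw [show (∑ p, V i p * z p) = ∑ p : Fin k × Fin m, V i p *
        ((if x p.1 = p.2 then (1:ℤ) else 0) - (if y p.1 = p.2 then 1 else 0)) from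
      Finset.sum_congr rfl fun p _ => by rw [hzeq p], key x y i] at this
    omega
  · intro hno x y hne
    by_contra hc
    push_neg at hc
    apply hno
    refine ⟨fun p => (if x p.1 = p.2 then (1:ℤ) else 0) - (if y p.1 = p.2 then 1 else 0),
      ?_, fun i => by rw [key x y i, hc i]; ring, ?_⟩
    · obtain ⟨j, hj⟩ : ∃ j, x j ≠ y j := Function.ne_iff.mp hne
      intro h
      have := congrFun h (j, x j)
      simp [Ne.symm hj] at this
    · intro j
      by_cases h : x j = y j
      · left; intro i; simp [h]
      · right
        refine ⟨x j, y j, h, by simp [Ne.symm h], by simp [h], fun r hrx hry => ?_⟩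
        simp [Ne.symm hrx, Ne.symm hry]
end

section
/- A vector z : Fin m → ℤ (with m ≥ 3) satisfies the three conditions (i) Σᵢ zᵢ = 0 together with zᵢ(zᵢ-1)(zᵢ+1)=0 for all i ≥ 1, (ii) zᵢzⱼ(zᵢ+zⱼ) = 0 for all 1 ≤ i < j, and (iii) zᵢzⱼz_l = 0 for all 1 ≤ i < j < l, if and only if z is either the zero vector or has exactly one entry equal to 1, one entry equal to -1, and all other entries 0. -/
theorem groebner_basis_block_characterization (m : ℕ) (hm : 3 ≤ m) (z : Fin m → ℤ) :
    ((∑ i, z i = 0) ∧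
      (∀ i : Fin m, 1 ≤ (i : ℕ) → z i * (z i - 1) * (z i + 1) = 0) ∧
      (∀ i j : Fin m, 1 ≤ (i : ℕ) → i < j → z i * z j * (z i + z j) = 0) ∧
      (∀ i j l : Fin m, 1 ≤ (i : ℕ) → i < j → j < l → z i * z j * z l = 0)) ↔
    (z = 0 ∨ ∃ p q : Fin m, p ≠ q ∧ z p = 1 ∧ z q = -1 ∧
      ∀ r, r ≠ p → r ≠ q → z r = 0) := by
  haveI : NeZero m := ⟨by omega⟩
  have hne0 : ∀ i : Fin m, i ≠ 0 → 1 ≤ (i : ℕ) := by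
    intro i hi
    rcases Nat.eq_zero_or_pos (i : ℕ) with h | h
    · exact absurd (Fin.ext (by simpa using h)) hi
    · exact h
  have h0ne : ∀ i : Fin m, 1 ≤ (i : ℕ) → i ≠ 0 := by
    intro i hi h; rw [h] at hi; simp at hi
  constructor
  · rintro ⟨hsum, h1, h2, h3⟩
    have hval : ∀ i : Fin m, 1 ≤ (i : ℕ) → z i = 0 ∨ z i = 1 ∨ z i = -1 := by
      intro i hi
      have := h1 i hi
      rcases mul_eq_zero.mp this with h | h
      · rcases mul_eq_zero.mp h with h | h
        · exact Or.inl h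
        · exact Or.inr (Or.inl (by linarith))
      · exact Or.inr (Or.inr (by linarith))
    have h2' : ∀ i j : Fin m, 1 ≤ (i : ℕ) → 1 ≤ (j : ℕ) → i ≠ j →
        z i * z j * (z i + z j) = 0 := by
      intro i j hi hj hij
      rcases lt_or_gt_of_ne hij with h | h
      · exact h2 i j hi h
      · linear_combination h2 j i hj h
    have h3' : ∀ i j l : Fin m, 1 ≤ (i : ℕ) → 1 ≤ (j : ℕ) → 1 ≤ (l : ℕ) →
        i ≠ j → i ≠ l → j ≠ l → z i * z j * z l = 0 := by
      intro i j l hi hj hl hij hil hjl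
      rcases lt_or_gt_of_ne hij with hij' | hij' <;>
      rcases lt_or_gt_of_ne hil with hil' | hil' <;>
      rcases lt_or_gt_of_ne hjl with hjl' | hjl'
      · exact h3 i j l hi hij' hjl'
      · linear_combination h3 i l j hi hil' hjl'
      · exact absurd (hjl'.trans hil') (lt_asymm hij')
      · linear_combination h3 l i j hl hil' hij'
      · linear_combination h3 j i l hj hij' hil'
      · exact absurd (hij'.trans hil') (lt_asymm hjl')
      · linear_combination h3 j l i hj hjl' hil'
      · linear_combination h3 l j i hl hjl' hij'
    set T : Finset (Fin m) := Finset.univ.filter (fun i => 1 ≤ (i : ℕ) ∧ z i ≠ 0) with hT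
    have hmemT : ∀ i, i ∈ T ↔ (1 ≤ (i : ℕ) ∧ z i ≠ 0) := by
      intro i; simp [hT]
    have hcard : T.card ≤ 2 := by
      by_contra hc
      push_neg at hc
      rw [Finset.two_lt_card] at hc
      obtain ⟨a, ha, b, hb, c, hc, hab, hac, hbc⟩ := hc
      rw [hmemT] at ha hb hc
      exact (mul_ne_zero (mul_ne_zero ha.2 hb.2) hc.2)
        (h3' a b c ha.1 hb.1 hc.1 hab hac hbc)
    have hzero : ∀ i : Fin m, i ≠ 0 → i ∉ T → z i = 0 := by
      intro i hi hiT
      by_contra h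
      exact hiT ((hmemT i).mpr ⟨hne0 i hi, h⟩)
    have h02 : T.card = 0 ∨ T.card = 1 ∨ T.card = 2 := by omega
    rcases h02 with h | h | h
    · -- all zero
      have hTe : T = ∅ := Finset.card_eq_zero.mp h
      have hz : ∀ i : Fin m, i ≠ 0 → z i = 0 := by
        intro i hi; exact hzero i hi (by simp [hTe])
      have hs : ∑ i, z i = z 0 :=
        Finset.sum_eq_single_of_mem 0 (Finset.mem_univ 0) (fun b _ hb => hz b hb)
      left
      funext i
      by_cases hi : i = 0
      · rw [hi]; rw [hs] at hsum; exact hsum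
      · exact hz i hi
    · -- one nonzero index ≥ 1
      obtain ⟨a, hTa⟩ := Finset.card_eq_one.mp h
      have haT : a ∈ T := by simp [hTa]
      rw [hmemT] at haT
      have ha0 : a ≠ 0 := h0ne a haT.1
      have hz : ∀ i : Fin m, i ≠ 0 → i ≠ a → z i = 0 := by
        intro i hi hia
        exact hzero i hi (by simp [hTa, hia])
      have hs : ∑ i, z i = ∑ i ∈ ({0, a} : Finset (Fin m)), z i := by
        refine (Finset.sum_subset (Finset.subset_univ _) ?_).symm
        intro x _ hx
        simp only [Finset.mem_insert, Finset.mem_singleton, not_or] at hx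
        exact hz x hx.1 hx.2
      rw [hs, Finset.sum_pair (Ne.symm ha0)] at hsum
      rcases hval a haT.1 with h' | h' | h'
      · exact absurd h' haT.2
      · right
        refine ⟨a, 0, ha0, h', by linarith, ?_⟩
        intro r hra hr0
        exact hz r hr0 hra
      · right
        refine ⟨0, a, Ne.symm ha0, by linarith, h', ?_⟩
        intro r hr0 hra
        exact hz r hr0 hra
    · -- two nonzero indices ≥ 1
      obtain ⟨a, b, hab, hTab⟩ := Finset.card_eq_two.mp h
      have haT : a ∈ T := by simp [hTab]
      have hbT : b ∈ T := by simp [hTab]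
      rw [hmemT] at haT hbT
      have ha0 : a ≠ 0 := h0ne a haT.1
      have hb0 : b ≠ 0 := h0ne b hbT.1
      have hz : ∀ i : Fin m, i ≠ 0 → i ≠ a → i ≠ b → z i = 0 := by
        intro i hi hia hib
        exact hzero i hi (by simp [hTab, hia, hib])
      have hsumab : z a + z b = 0 := by
        have := h2' a b haT.1 hbT.1 hab
        rcases mul_eq_zero.mp this with h' | h'
        · rcases mul_eq_zero.mp h' with h' | h'
          · exact absurd h' haT.2
          · exact absurd h' hbT.2
        · exact h'
      have hs : ∑ i, z i = ∑ i ∈ ({0, a, b} : Finset (Fin m)), z i := by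
        refine (Finset.sum_subset (Finset.subset_univ _) ?_).symm
        intro x _ hx
        simp only [Finset.mem_insert, Finset.mem_singleton, not_or] at hx
        exact hz x hx.1 hx.2.1 hx.2.2
      have h0nm : (0 : Fin m) ∉ ({a, b} : Finset (Fin m)) := by
        simp [Ne.symm ha0, Ne.symm hb0]
      rw [hs, Finset.sum_insert h0nm, Finset.sum_pair hab] at hsum
      have hz0 : z 0 = 0 := by linarith
      rcases hval a haT.1 with h' | h' | h'
      · exact absurd h' haT.2
      · right
        refine ⟨a, b, hab, h', by linarith, ?_⟩
        intro r hra hrb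
        by_cases hr0 : r = 0
        · rw [hr0]; exact hz0
        · exact hz r hr0 hra hrb
      · right
        refine ⟨b, a, Ne.symm hab, by linarith, h', ?_⟩
        intro r hrb hra
        by_cases hr0 : r = 0
        · rw [hr0]; exact hz0
        · exact hz r hr0 hra hrb
  · rintro (rfl | ⟨p, q, hpq, hp, hq, ho⟩)
    · refine ⟨by simp, by simp, by simp, by simp⟩
    · have hmem : ∀ r : Fin m, z r ≠ 0 → r = p ∨ r = q := by
        intro r h
        by_contra hc
        push_neg at hc
        exact h (ho r hc.1 hc.2)
      have hvals : ∀ r : Fin m, z r = 0 ∨ z r = 1 ∨ z r = -1 := by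
        intro r
        by_cases h : z r = 0
        · exact Or.inl h
        · rcases hmem r h with h' | h'
          · exact Or.inr (Or.inl (h' ▸ hp))
          · exact Or.inr (Or.inr (h' ▸ hq))
      refine ⟨?_, ?_, ?_, ?_⟩
      · have hs : ∑ i, z i = ∑ i ∈ ({p, q} : Finset (Fin m)), z i := by
          refine (Finset.sum_subset (Finset.subset_univ _) ?_).symm
          intro x _ hx
          simp only [Finset.mem_insert, Finset.mem_singleton, not_or] at hx
          exact ho x hx.1 hx.2
        rw [hs, Finset.sum_pair hpq, hp, hq]
        ring
      · intro i _
        rcases hvals i with h | h | h <;> rw [h] <;> ring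
      · intro i j _ hij
        by_cases hi : z i = 0
        · rw [hi]; ring
        by_cases hj : z j = 0
        · rw [hj]; ring
        rcases hmem i hi with h' | h' <;> rcases hmem j hj with h'' | h''
        · exact absurd (h'.trans h''.symm) (ne_of_lt hij)
        · rw [h', h'', hp, hq]; ring
        · rw [h', h'', hp, hq]; ring
        · exact absurd (h'.trans h''.symm) (ne_of_lt hij)
      · intro i j l _ hij hjl
        by_cases hi : z i = 0
        · rw [hi]; ring
        by_cases hj : z j = 0
        · rw [hj]; ring
        by_cases hl : z l = 0
        · rw [hl]; ring
        rcases hmem i hi with h' | h' <;> rcases hmem j hj with h'' | h'' <;>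
          rcases hmem l hl with h''' | h'''
        all_goals first
          | exact absurd (h'.trans h''.symm) (ne_of_lt hij)
          | exact absurd (h''.trans h'''.symm) (ne_of_lt hjl)
          | exact absurd (h'.trans h'''.symm) (ne_of_lt (lt_trans hij hjl))
end

section
/- Let R = {v₁,…,vₙ} ⊆ {0,1}^k and let B be the n×k integer matrix whose i-th row is vᵢ - v̄ᵢ (entrywise difference of vᵢ and its bitwise negation, i.e. the vector with entries 2vᵢ[j] - 1 ∈ {-1,1}). Then R is a resolving set of the hypercube H(k,2) if and only if the only z ∈ {-1,0,1}^k with Bz = 0 is z = 0. -/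
lemma hd_cast (k : ℕ) (a b : Fin k → Fin 2) :
    (hammingDist a b : ℤ) = ∑ j, (if a j = b j then 0 else 1) := by
  unfold hammingDist
  rw [Finset.card_filter]
  push_cast
  congr 1
  ext j
  by_cases h : a j = b j <;> simp [h]

lemma key (k n : ℕ) (v : Fin n → (Fin k → Fin 2))
    (B : Matrix (Fin n) (Fin k) ℤ)
    (hB : ∀ i j, B i j = 2 * (v i j : ℤ) - 1)
    (x y : Fin k → Fin 2) (i : Fin n) :
    (hammingDist (v i) y : ℤ) - hammingDist (v i) x
      = ∑ j, B i j * ((x j : ℤ) - (y j : ℤ)) := by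
  rw [hd_cast, hd_cast, ← Finset.sum_sub_distrib]
  apply Finset.sum_congr rfl
  intro j _
  rw [hB]
  have ha : v i j = 0 ∨ v i j = 1 := by omega
  have hb : x j = 0 ∨ x j = 1 := by omega
  have hc : y j = 0 ∨ y j = 1 := by omega
  rcases ha with h1 | h1 <;> rcases hb with h2 | h2 <;> rcases hc with h3 | h3 <;>
    simp [h1, h2, h3] <;> ring

theorem hypercube_resolving_iff (k n : ℕ) (v : Fin n → (Fin k → Fin 2))
    (B : Matrix (Fin n) (Fin k) ℤ)
    (hB : ∀ i j, B i j = 2 * (v i j : ℤ) - 1) :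
    (∀ x y : Fin k → Fin 2, x ≠ y → ∃ i, hammingDist (v i) x ≠ hammingDist (v i) y) ↔
    (∀ z : Fin k → ℤ, (∀ j, z j = -1 ∨ z j = 0 ∨ z j = 1) →
      (∀ i, ∑ j, B i j * z j = 0) → z = 0) := by
  constructor
  · intro hres z hz hBz
    by_contra hne
    set x : Fin k → Fin 2 := fun j => if z j = 1 then 1 else 0 with hx
    set y : Fin k → Fin 2 := fun j => if z j = -1 then 1 else 0 with hy
    have hxy : ∀ j, (x j : ℤ) - (y j : ℤ) = z j := by
      intro j
      rcases hz j with h | h | h <;> simp [hx, hy, h]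
    have hxyne : x ≠ y := by
      intro h
      apply hne
      funext j
      have := congrFun h j
      rcases hz j with hj | hj | hj
      · simp [hx, hy, hj] at this
      · exact hj
      · simp [hx, hy, hj] at this
    obtain ⟨i, hi⟩ := hres x y hxyne
    apply hi
    have := key k n v B hB x y i
    simp only [hxy] at this
    rw [hBz i] at this
    omega
  · intro hz x y hxy
    by_contra h
    push_neg at h
    apply hxy
    set z : Fin k → ℤ := fun j => (x j : ℤ) - (y j : ℤ) with hzdef
    have hz01 : ∀ j, z j = -1 ∨ z j = 0 ∨ z j = 1 := by
      intro j
      have : (x j : ℤ) < 2 := by exact_mod_cast (x j).2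
      have : (y j : ℤ) < 2 := by exact_mod_cast (y j).2
      have : (0:ℤ) ≤ (x j : ℤ) := Int.ofNat_nonneg _
      have : (0:ℤ) ≤ (y j : ℤ) := Int.ofNat_nonneg _
      simp only [hzdef]
      omega
    have hB0 : ∀ i, ∑ j, B i j * z j = 0 := by
      intro i
      have := key k n v B hB x y i
      rw [h i] at this
      simp only [hzdef]
      omega
    have := hz z hz01 hB0
    funext j
    have hj := congrFun this j
    simp only [hzdef, Pi.zero_apply, sub_eq_zero] at hj
    have hb : x j = 0 ∨ x j = 1 := by omega
    have hc : y j = 0 ∨ y j = 1 := by omega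
    rcases hb with h2 | h2 <;> rcases hc with h3 | h3 <;> simp [h2, h3] at hj ⊢
end

section
/- Let R be a set of strings in H(k,m) with associated matrix A of vectorized one-hot encodings (rows indexed by R). If v ∈ R is such that the row of v is a rational linear combination of the other rows of A, and R is resolving, then R \ {v} is also resolving. -/
lemma enc_dot_eq (k m : ℕ) (enc : (Fin k → Fin m) → (Fin k × Fin m) → ℚ)
    (henc : ∀ s p, enc s p = if s p.1 = p.2 then 1 else 0)
    (r x : Fin k → Fin m) :
    ∑ p : Fin k × Fin m, enc r p * enc x p
      = ((Finset.univ.filter fun i => r i = x i).card : ℚ) := by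
  simp only [henc]
  rw [Fintype.sum_prod_type]
  have h1 : ∀ i : Fin k,
      (∑ j : Fin m, (if r i = j then (1:ℚ) else 0) * (if x i = j then 1 else 0))
        = if r i = x i then 1 else 0 := by
    intro i
    rw [Finset.sum_eq_single (r i)]
    · simp [eq_comm]
    · intro j _ hj
      simp [Ne.symm hj]
    · simp
  simp only [h1]
  rw [Finset.sum_boole]

lemma sum_eq_dist_diff (k m : ℕ) (enc : (Fin k → Fin m) → (Fin k × Fin m) → ℚ)
    (henc : ∀ s p, enc s p = if s p.1 = p.2 then 1 else 0)
    (r x y : Fin k → Fin m) :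
    ∑ p : Fin k × Fin m, enc r p * (enc x p - enc y p)
      = (hammingDist r y : ℚ) - (hammingDist r x : ℚ) := by
  have hsplit : ∑ p : Fin k × Fin m, enc r p * (enc x p - enc y p)
      = (∑ p, enc r p * enc x p) - ∑ p, enc r p * enc y p := by
    rw [← Finset.sum_sub_distrib]; congr 1; ext p; ring
  rw [hsplit, enc_dot_eq k m enc henc r x, enc_dot_eq k m enc henc r y]
  have hx : (Finset.univ.filter fun i => r i = x i).card + hammingDist r x = k := by
    have := Finset.card_filter_add_card_filter_not
      (s := (Finset.univ : Finset (Fin k))) (p := fun i => r i = x i)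
    simpa [hammingDist, Finset.card_univ] using this
  have hy : (Finset.univ.filter fun i => r i = y i).card + hammingDist r y = k := by
    have := Finset.card_filter_add_card_filter_not
      (s := (Finset.univ : Finset (Fin k))) (p := fun i => r i = y i)
    simpa [hammingDist, Finset.card_univ] using this
  have hx' : ((Finset.univ.filter fun i => r i = x i).card : ℚ)
      = (k : ℚ) - hammingDist r x := by
    have := congrArg (fun n : ℕ => (n : ℚ)) hx; push_cast at this ⊢; linarith
  have hy' : ((Finset.univ.filter fun i => r i = y i).card : ℚ)
      = (k : ℚ) - hammingDist r y := by
    have := congrArg (fun n : ℕ => (n : ℚ)) hy; push_cast at this ⊢; linarith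
  rw [hx', hy']; ring

theorem remove_dependent_row_resolving (k m : ℕ) (R : Set (Fin k → Fin m))
    (enc : (Fin k → Fin m) → (Fin k × Fin m) → ℚ)
    (henc : ∀ s p, enc s p = if s p.1 = p.2 then 1 else 0)
    (v : Fin k → Fin m) (hv : v ∈ R)
    (hdep : enc v ∈ Submodule.span ℚ (enc '' (R \ {v})))
    (hres : ∀ x y : Fin k → Fin m, x ≠ y → ∃ r ∈ R, hammingDist r x ≠ hammingDist r y) :
    ∀ x y : Fin k → Fin m, x ≠ y → ∃ r ∈ R \ {v}, hammingDist r x ≠ hammingDist r y := by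
  intro x y hxy
  by_contra hcon
  push_neg at hcon
  -- All rows in R \ {v} give equal distances; show enc v too, contradicting hres.
  have hP : ∀ u ∈ Submodule.span ℚ (enc '' (R \ {v})),
      ∑ p : Fin k × Fin m, u p * (enc x p - enc y p) = 0 := by
    intro u hu
    induction hu using Submodule.span_induction with
    | mem u hu =>
      obtain ⟨r, hr, rfl⟩ := hu
      rw [sum_eq_dist_diff k m enc henc r x y, hcon r hr]
      ring
    | zero => simp
    | add u w _ _ hu hw =>
      simp only [Pi.add_apply, add_mul, Finset.sum_add_distrib, hu, hw, add_zero]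
    | smul c u _ hu =>
      simp only [Pi.smul_apply, smul_eq_mul, mul_assoc, ← Finset.mul_sum, hu, mul_zero]
  have hveq : hammingDist v x = hammingDist v y := by
    have := hP (enc v) hdep
    rw [sum_eq_dist_diff k m enc henc v x y] at this
    exact_mod_cast (by linarith : (hammingDist v x : ℚ) = hammingDist v y)
  obtain ⟨r, hrR, hrne⟩ := hres x y hxy
  rcases eq_or_ne r v with rfl | hrv
  · exact hrne hveq
  · exact hrne (hcon r ⟨hrR, hrv⟩)
end

section
/- For a set R of binary strings of length k, R is resolving in H(k,2) if and only if the map sending each vertex x ∈ {0,1}^k to the real vector (⟨r - r̄, x⟩)_{r ∈ R} is injective, where r̄ is the bitwise complement of r. -/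
lemma hd_cast_s17 (k : ℕ) (r x : Fin k → Fin 2) :
    (hammingDist r x : ℝ) =
      ∑ j, ((r j : ℝ) + (x j : ℝ) - 2 * (r j : ℝ) * (x j : ℝ)) := by
  rw [hammingDist, Finset.card_filter]
  push_cast
  apply Finset.sum_congr rfl
  intro j _
  have hne : r j ≠ x j ↔ (r j : ℕ) ≠ (x j : ℕ) := by
    constructor
    · intro h h'; exact h (Fin.ext h')
    · intro h h'; exact h (by rw [h'])
  have ha : ((r j : ℕ) = 0 ∨ (r j : ℕ) = 1) := by have := (r j).isLt; omega
  have hb : ((x j : ℕ) = 0 ∨ (x j : ℕ) = 1) := by have := (x j).isLt; omega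
  rcases ha with ha | ha <;> rcases hb with hb | hb <;>
    simp [hne, ha, hb] <;> norm_num

lemma comp_eq (k : ℕ) (r x y : Fin k → Fin 2) :
    (∑ j, ((r j : ℝ) - (1 - (r j : ℝ))) * (x j : ℝ) =
      ∑ j, ((r j : ℝ) - (1 - (r j : ℝ))) * (y j : ℝ)) ↔
    hammingDist r x = hammingDist r y := by
  have key : ∑ j, ((r j : ℝ) - (1 - (r j : ℝ))) * (x j : ℝ)
      - ∑ j, ((r j : ℝ) - (1 - (r j : ℝ))) * (y j : ℝ)
      = (hammingDist r y : ℝ) - (hammingDist r x : ℝ) := by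
    rw [hd_cast_s17, hd_cast_s17, ← Finset.sum_sub_distrib, ← Finset.sum_sub_distrib]
    apply Finset.sum_congr rfl
    intro j _; ring
  constructor
  · intro h
    have : (hammingDist r y : ℝ) = (hammingDist r x : ℝ) := by
      have := key; rw [h] at this; linarith
    exact_mod_cast this.symm
  · intro h
    have : (hammingDist r y : ℝ) - (hammingDist r x : ℝ) = 0 := by
      rw [h]; ring
    rw [this] at key; linarith

theorem resolving_iff_injective_linear (k : ℕ) (R : Set (Fin k → Fin 2)) :
    (∀ x y : Fin k → Fin 2, x ≠ y → ∃ r ∈ R, hammingDist r x ≠ hammingDist r y) ↔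
    Function.Injective (fun x : Fin k → Fin 2 =>
      fun r : R => ∑ j, ((r.1 j : ℝ) - (1 - (r.1 j : ℝ))) * (x j : ℝ)) := by
  constructor
  · intro h x y hxy
    by_contra hne
    obtain ⟨r, hr, hd⟩ := h x y hne
    exact hd ((comp_eq k r x y).mp (congrFun hxy ⟨r, hr⟩))
  · intro h x y hxy
    by_contra hc
    push_neg at hc
    apply hxy
    apply h
    funext r
    exact (comp_eq k r.1 x y).mpr (hc r.1 r.2)
end
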